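/- Let β(t) be the trajectory of the reparametrized gradient flow with initialization w_+(0) = w_−(0) = ω_0 where all entries of ω_0 are nonzero, and let w_min := min_{j∈[d]} |ω_{0,j}|. Then for all t ≥ 0, (d/dt) L(β(t)) ≤ −(2 w_min²/n)·‖∇_β L(β(t))‖_2². In particular, the loss is nonincreasing along the flow. -/

import Mathlib

open Real Filter Finset

noncomputable section

namespace AttnGF

/-- Softmax of a vector in `ℝ^L`. -/
def S {L : ℕ} (u : Fin L → ℝ) (l : Fin L) : ℝ := Real.exp (u l) / ∑ j, Real.exp (u j)

/-- Euclidean norm of a vector. -/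
def l2 {d : ℕ} (x : Fin d → ℝ) : ℝ := Real.sqrt (∑ j, x j ^ 2)

/-- ℓ1 norm of a vector. -/
def l1 {d : ℕ} (x : Fin d → ℝ) : ℝ := ∑ j, |x j|

variable {n L d de : ℕ}

/-- Token scores γ_{il} = y_i v^⊤ x_{il}. -/
def gam (X : Fin n → Fin L → Fin d → ℝ) (y : Fin n → ℝ) (v : Fin d → ℝ)
    (i : Fin n) (l : Fin L) : ℝ := y i * ∑ j, v j * X i l j

/-- g_i(β) = X_i (β ⊙ z_i) for the diagonal attention model. -/
def gD (X : Fin n → Fin L → Fin d → ℝ) (z : Fin n → Fin d → ℝ) (i : Fin n)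
    (β : Fin d → ℝ) (l : Fin L) : ℝ := ∑ j, X i l j * (β j * z i j)

/-- Empirical exponential loss for the diagonal attention model. -/
def lossD (X : Fin n → Fin L → Fin d → ℝ) (z : Fin n → Fin d → ℝ)
    (y : Fin n → ℝ) (v : Fin d → ℝ) (β : Fin d → ℝ) : ℝ :=
  (1 / (n : ℝ)) * ∑ i, Real.exp (-(∑ l, gam X y v i l * S (gD X z i β) l))

/-- Constraint vectors B_{il} = z_i ⊙ (x_{i,opt(i)} − x_{il}). -/
def Bv (X : Fin n → Fin L → Fin d → ℝ) (z : Fin n → Fin d → ℝ)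
    (opt : Fin n → Fin L) (i : Fin n) (l : Fin L) (j : Fin d) : ℝ :=
  z i j * (X i (opt i) j - X i l j)

/-- (Σ(u) γ)_l where Σ(u) = Diag(S(u)) − S(u) S(u)^⊤. -/
def SigMul {L : ℕ} (u γv : Fin L → ℝ) (l : Fin L) : ℝ :=
  S u l * γv l - S u l * ∑ j, S u j * γv j

/-- j-th component of the gradient (partial derivative) of f at x. -/
def pD {d : ℕ} (f : (Fin d → ℝ) → ℝ) (x : Fin d → ℝ) (j : Fin d) : ℝ :=
  fderiv ℝ f x (Pi.single j 1)

/-- Assumption A1. -/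
def A1 (X : Fin n → Fin L → Fin d → ℝ) (y : Fin n → ℝ) (v : Fin d → ℝ)
    (opt : Fin n → Fin L) (nopt : Fin n → ℝ) : Prop :=
  ∀ i : Fin n, ∀ l : Fin L, l ≠ opt i →
    gam X y v i l < gam X y v i (opt i) ∧ gam X y v i l = nopt i

/-- Feasibility for the ℓ1-SVM. -/
def Feas (X : Fin n → Fin L → Fin d → ℝ) (z : Fin n → Fin d → ℝ)
    (opt : Fin n → Fin L) (βf : Fin d → ℝ) : Prop :=
  ∀ i : Fin n, ∀ l : Fin L, l ≠ opt i → 1 ≤ ∑ j, βf j * Bv X z opt i l j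

/-- Reparametrized gradient flow on (w₊, w₋). -/
def Flow (X : Fin n → Fin L → Fin d → ℝ) (z : Fin n → Fin d → ℝ)
    (y : Fin n → ℝ) (v : Fin d → ℝ) (wp wm : ℝ → Fin d → ℝ) : Prop :=
  ∀ t : ℝ, 0 ≤ t → ∀ j : Fin d,
    HasDerivAt (fun s => wp s j)
      (-(pD (fun u => lossD X z y v (fun k => (u k ^ 2 - wm t k ^ 2) / 2)) (wp t) j)) t ∧
    HasDerivAt (fun s => wm s j)
      (-(pD (fun u => lossD X z y v (fun k => (wp t k ^ 2 - u k ^ 2) / 2)) (wm t) j)) t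

/-- β(t) = (w₊(t)^{⊙2} − w₋(t)^{⊙2})/2. -/
def bCurve (wp wm : ℝ → Fin d → ℝ) (t : ℝ) (j : Fin d) : ℝ :=
  (wp t j ^ 2 - wm t j ^ 2) / 2

/-- Assumption A2 (initial loss bound). -/
def A2 (X : Fin n → Fin L → Fin d → ℝ) (z : Fin n → Fin d → ℝ)
    (y : Fin n → ℝ) (v : Fin d → ℝ) (opt : Fin n → Fin L) (nopt : Fin n → ℝ)
    (β0 : Fin d → ℝ) : Prop :=
  ∀ jj : Fin n, lossD X z y v β0 ≤
    (Real.exp (-(nopt jj)) +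
      ∑ i ∈ Finset.univ.erase jj, Real.exp (-(gam X y v i (opt i)))) / (n : ℝ)

/-- Margin μ(β) = min_{i, l ≠ opt(i)} β^⊤ B_{il}. -/
def margin (X : Fin n → Fin L → Fin d → ℝ) (z : Fin n → Fin d → ℝ)
    (opt : Fin n → Fin L) (β : Fin d → ℝ) : ℝ :=
  sInf {m : ℝ | ∃ i : Fin n, ∃ l : Fin L, l ≠ opt i ∧ m = ∑ j, β j * Bv X z opt i l j}

/-- φ_{il}(t). -/
def phi (X : Fin n → Fin L → Fin d → ℝ) (z : Fin n → Fin d → ℝ)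
    (y : Fin n → ℝ) (v : Fin d → ℝ) (β : ℝ → Fin d → ℝ) (i : Fin n) (l : Fin L)
    (t : ℝ) : ℝ :=
  -(2 / (n : ℝ)) * ∫ τ in (0:ℝ)..t,
    Real.exp (-(∑ l', gam X y v i l' * S (gD X z i (β τ)) l')) *
      SigMul (gD X z i (β τ)) (gam X y v i) l

/-- Dual variables λ_{il}(t) = φ_{il}(t) / ln μ(β(t)). -/
def lam (X : Fin n → Fin L → Fin d → ℝ) (z : Fin n → Fin d → ℝ)
    (y : Fin n → ℝ) (v : Fin d → ℝ) (opt : Fin n → Fin L) (β : ℝ → Fin d → ℝ)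
    (i : Fin n) (l : Fin L) (t : ℝ) : ℝ :=
  (1 / Real.log (margin X z opt (β t))) * phi X z y v β i l t

/-- g_i(K,Q) = X_i K Q^⊤ z_i for the full attention model. -/
def gM (X : Fin n → Fin L → Fin d → ℝ) (z : Fin n → Fin d → ℝ) (i : Fin n)
    (K Q : Fin d → Fin de → ℝ) (l : Fin L) : ℝ :=
  ∑ a, ∑ b, ∑ c, X i l a * K a b * Q c b * z i c

/-- Empirical exponential loss for the full attention model. -/
def lossM (X : Fin n → Fin L → Fin d → ℝ) (z : Fin n → Fin d → ℝ)
    (y : Fin n → ℝ) (v : Fin d → ℝ) (K Q : Fin d → Fin de → ℝ) : ℝ :=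
  (1 / (n : ℝ)) * ∑ i, Real.exp (-(∑ l, gam X y v i l * S (gM X z i K Q) l))

/-- Partial derivative of f with respect to the (a,b) entry of a matrix. -/
def pDM {d de : ℕ} (f : (Fin d → Fin de → ℝ) → ℝ) (M : Fin d → Fin de → ℝ)
    (a : Fin d) (b : Fin de) : ℝ :=
  fderiv ℝ f M (Pi.single a (Pi.single b 1))

/-- Gradient flow on the key and query matrices. -/
def MFlow (X : Fin n → Fin L → Fin d → ℝ) (z : Fin n → Fin d → ℝ)
    (y : Fin n → ℝ) (v : Fin d → ℝ) (K Q : ℝ → Fin d → Fin de → ℝ) : Prop :=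
  ∀ t : ℝ, 0 ≤ t → ∀ (a : Fin d) (b : Fin de),
    HasDerivAt (fun s => K s a b) (-(pDM (fun M => lossM X z y v M (Q t)) (K t) a b)) t ∧
    HasDerivAt (fun s => Q s a b) (-(pDM (fun M => lossM X z y v (K t) M) (Q t) a b)) t

/-- A rectangular matrix is diagonal: zero off the main diagonal. -/
def RectDiag {d de : ℕ} (M : Fin d → Fin de → ℝ) : Prop :=
  ∀ (a : Fin d) (b : Fin de), (a : ℕ) ≠ (b : ℕ) → M a b = 0

/-- Orthogonality: U^⊤ U = 1. -/
def Orth {d : ℕ} (U : Fin d → Fin d → ℝ) : Prop :=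
  ∀ j j' : Fin d, ∑ a, U a j * U a j' = (if j = j' then (1:ℝ) else 0)

/-- Assumption B1, with the pairing of non-optimal tokens given by the involution σ. -/
def B1 (X : Fin n → Fin L → Fin d → ℝ) (z : Fin n → Fin d → ℝ)
    (opt : Fin n → Fin L) (σ : Fin n → Fin L → Fin L) : Prop :=
  (∀ i j : Fin n, i ≠ j →
    (∑ a, X i (opt i) a * X j (opt j) a = 0) ∧ (∑ a, z i a * z j a = 0)) ∧
  (∀ i, |∑ a, X i (opt i) a * z i a| = l2 (X i (opt i)) * l2 (z i)) ∧
  (∀ i, ∀ l, l ≠ opt i → σ i l ≠ opt i ∧ σ i l ≠ l ∧ σ i (σ i l) = l ∧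
    ∃ c : ℝ, -1 ≤ c ∧ c < 1 ∧
      (∑ a, X i (opt i) a * (X i l a - X i (σ i l) a)) = 0 ∧
      (∀ a, X i l a + X i (σ i l) a = 2 * c * X i (opt i) a))

/-- Rotated constraint vectors B̃_{il}. -/
def Btil (X : Fin n → Fin L → Fin d → ℝ) (z : Fin n → Fin d → ℝ)
    (opt : Fin n → Fin L) (pim : Fin n → Fin d) (i : Fin n) (l : Fin L) (j : Fin d) : ℝ :=
  Real.sign (∑ a, X i (opt i) a * z i a) * (∑ a, (X i (opt i) a - X i l a) * z i a) *
    (if j = pim i then 1 else 0)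

/-- Margin with respect to the rotated constraints. -/
def marginB (X : Fin n → Fin L → Fin d → ℝ) (z : Fin n → Fin d → ℝ)
    (opt : Fin n → Fin L) (pim : Fin n → Fin d) (β : Fin d → ℝ) : ℝ :=
  sInf {m : ℝ | ∃ i : Fin n, ∃ l : Fin L, l ≠ opt i ∧ m = ∑ j, β j * Btil X z opt pim i l j}

/-- Margin for a combined attention weight matrix. -/
def marginM (X : Fin n → Fin L → Fin d → ℝ) (z : Fin n → Fin d → ℝ)
    (opt : Fin n → Fin L) (W : Fin d → Fin d → ℝ) : ℝ :=
  sInf {m : ℝ | ∃ i : Fin n, ∃ l : Fin L, l ≠ opt i ∧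
    m = ∑ a, ∑ c, (X i (opt i) a - X i l a) * W a c * z i c}

/-- Nuclear norm ‖W‖_* = trace((W^⊤W)^{1/2}). -/
def nuclear {d : ℕ} (W : Matrix (Fin d) (Fin d) ℝ) : ℝ :=
  ((Matrix.posSemidef_conjTranspose_mul_self W).1.eigenvectorUnitary.1 *
    Matrix.diagonal (Real.sqrt ∘ (Matrix.posSemidef_conjTranspose_mul_self W).1.eigenvalues) *
    (star (Matrix.posSemidef_conjTranspose_mul_self W).1.eigenvectorUnitary :
      Matrix (Fin d) (Fin d) ℝ)).trace

end AttnGF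

namespace AttnGF

lemma gD_diff {n L d : ℕ} (X : Fin n → Fin L → Fin d → ℝ) (z : Fin n → Fin d → ℝ)
    (i : Fin n) (l : Fin L) : Differentiable ℝ (fun β : Fin d → ℝ => gD X z i β l) := by
  unfold gD
  apply Differentiable.fun_sum
  intro j _
  exact ((differentiable_apply j).mul_const _).const_mul _

lemma lossD_diff {n L d : ℕ} (X : Fin n → Fin L → Fin d → ℝ) (z : Fin n → Fin d → ℝ)
    (y : Fin n → ℝ) (v : Fin d → ℝ) : Differentiable ℝ (lossD X z y v) := by
  unfold lossD
  apply Differentiable.const_mul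
  apply Differentiable.fun_sum; intro i _
  apply Differentiable.exp
  apply Differentiable.neg
  apply Differentiable.fun_sum; intro l _
  apply Differentiable.const_mul
  unfold S
  simp only [div_eq_mul_inv]
  apply Differentiable.mul
  · exact (gD_diff X z i l).exp
  · apply Differentiable.inv
    · apply Differentiable.fun_sum; intro j _; exact (gD_diff X z i j).exp
    · intro β
      have : Nonempty (Fin L) := ⟨l⟩
      exact ne_of_gt (Finset.sum_pos (fun j _ => Real.exp_pos _) Finset.univ_nonempty)

lemma hasFDerivAt_sq_half {d : ℕ} (a b : Fin d → ℝ) :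
    HasFDerivAt (fun u : Fin d → ℝ => fun k => (u k ^ 2 - b k ^ 2) / 2)
      (ContinuousLinearMap.pi fun k =>
        a k • (ContinuousLinearMap.proj k : (Fin d → ℝ) →L[ℝ] ℝ)) a := by
  rw [hasFDerivAt_pi']
  intro k
  rw [ContinuousLinearMap.proj_pi]
  have hm := (hasFDerivAt_apply (𝕜 := ℝ) k a).fun_mul (hasFDerivAt_apply (𝕜 := ℝ) k a)
  have h := (hm.sub_const (b k ^ 2)).const_mul ((2:ℝ)⁻¹)
  convert! h using 1
  · funext u; ring
  · ext v; simp; ring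

lemma hasFDerivAt_sq_half' {d : ℕ} (a b : Fin d → ℝ) :
    HasFDerivAt (fun u : Fin d → ℝ => fun k => (a k ^ 2 - u k ^ 2) / 2)
      (ContinuousLinearMap.pi fun k =>
        (-(b k)) • (ContinuousLinearMap.proj k : (Fin d → ℝ) →L[ℝ] ℝ)) b := by
  rw [hasFDerivAt_pi']
  intro k
  rw [ContinuousLinearMap.proj_pi]
  have hm := (hasFDerivAt_apply (𝕜 := ℝ) k b).fun_mul (hasFDerivAt_apply (𝕜 := ℝ) k b)
  have h := (hm.const_sub (a k ^ 2)).const_mul ((2:ℝ)⁻¹)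
  convert! h using 1
  · funext u; ring
  · ext v; simp; ring

lemma pD_sq {d : ℕ} (F : (Fin d → ℝ) → ℝ) (hF : Differentiable ℝ F)
    (a b : Fin d → ℝ) (j : Fin d) :
    pD (fun u => F (fun k => (u k ^ 2 - b k ^ 2) / 2)) a j
      = pD F (fun k => (a k ^ 2 - b k ^ 2) / 2) j * a j := by
  have hΦ := hasFDerivAt_sq_half a b
  have hc : HasFDerivAt (fun u => F (fun k => (u k ^ 2 - b k ^ 2) / 2))
      ((fderiv ℝ F fun k => (a k ^ 2 - b k ^ 2) / 2).comp
        (ContinuousLinearMap.pi fun k => a k • ContinuousLinearMap.proj k)) a :=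
    ((hF _).hasFDerivAt).comp a hΦ
  unfold pD
  rw [hc.fderiv]
  rw [ContinuousLinearMap.comp_apply]
  have hval : (ContinuousLinearMap.pi fun k =>
      a k • (ContinuousLinearMap.proj k : (Fin d → ℝ) →L[ℝ] ℝ)) (Pi.single j 1)
      = a j • (Pi.single j 1 : Fin d → ℝ) := by
    funext k
    by_cases h : k = j <;> simp [Pi.single_apply, h]
  rw [hval, map_smul]
  simp [mul_comm]

lemma pD_sq' {d : ℕ} (F : (Fin d → ℝ) → ℝ) (hF : Differentiable ℝ F)
    (a b : Fin d → ℝ) (j : Fin d) :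
    pD (fun u => F (fun k => (a k ^ 2 - u k ^ 2) / 2)) b j
      = pD F (fun k => (a k ^ 2 - b k ^ 2) / 2) j * (-(b j)) := by
  have hΦ := hasFDerivAt_sq_half' a b
  have hc : HasFDerivAt (fun u => F (fun k => (a k ^ 2 - u k ^ 2) / 2))
      ((fderiv ℝ F fun k => (a k ^ 2 - b k ^ 2) / 2).comp
        (ContinuousLinearMap.pi fun k => (-(b k)) • ContinuousLinearMap.proj k)) b :=
    ((hF _).hasFDerivAt).comp b hΦ
  unfold pD
  rw [hc.fderiv]
  rw [ContinuousLinearMap.comp_apply]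
  have hval : (ContinuousLinearMap.pi fun k =>
      (-(b k)) • (ContinuousLinearMap.proj k : (Fin d → ℝ) →L[ℝ] ℝ)) (Pi.single j 1)
      = (-(b j)) • (Pi.single j 1 : Fin d → ℝ) := by
    funext k
    by_cases h : k = j <;> simp [Pi.single_apply, h]
  rw [hval, map_smul]
  simp [mul_comm]

lemma flow_deriv {n L d : ℕ} (X : Fin n → Fin L → Fin d → ℝ) (z : Fin n → Fin d → ℝ)
    (y : Fin n → ℝ) (v : Fin d → ℝ) (wp wm : ℝ → Fin d → ℝ)
    (hflow : Flow X z y v wp wm) {t : ℝ} (ht : 0 ≤ t) (j : Fin d) :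
    HasDerivAt (fun s => wp s j)
      (-(pD (lossD X z y v) (bCurve wp wm t) j * wp t j)) t ∧
    HasDerivAt (fun s => wm s j)
      (pD (lossD X z y v) (bCurve wp wm t) j * wm t j) t := by
  obtain ⟨h1, h2⟩ := hflow t ht j
  have hd := lossD_diff X z y v
  have e1 := pD_sq (lossD X z y v) hd (wp t) (wm t) j
  have e2 := pD_sq' (lossD X z y v) hd (wp t) (wm t) j
  constructor
  · rw [e1] at h1; exact h1
  · rw [e2] at h2
    have : pD (lossD X z y v) (bCurve wp wm t) j * wm t j
        = -((pD (lossD X z y v) (fun k => (wp t k ^ 2 - wm t k ^ 2) / 2) j) * (-(wm t j))) := by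
      show _ = -((pD (lossD X z y v) (bCurve wp wm t) j) * (-(wm t j))); ring
    rw [this]
    exact h2

lemma conserve {n L d : ℕ} (X : Fin n → Fin L → Fin d → ℝ) (z : Fin n → Fin d → ℝ)
    (y : Fin n → ℝ) (v : Fin d → ℝ) (wp wm : ℝ → Fin d → ℝ)
    (hflow : Flow X z y v wp wm) {t : ℝ} (ht : 0 ≤ t) (j : Fin d) :
    wp t j * wm t j = wp 0 j * wm 0 j := by
  have hz : ∀ x ∈ Set.Icc (0:ℝ) t, HasDerivAt (fun s => wp s j * wm s j) 0 x := by
    intro x hx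
    obtain ⟨h1, h2⟩ := flow_deriv X z y v wp wm hflow hx.1 j
    have hm := h1.fun_mul h2
    convert! hm using 1
    ring
  have := constant_of_has_deriv_right_zero
    (f := fun s => wp s j * wm s j) (a := 0) (b := t)
    (fun x hx => ((hz x hx).continuousAt.continuousWithinAt))
    (fun x hx => ((hz x ⟨hx.1, hx.2.le⟩).hasDerivWithinAt))
  exact this t (Set.right_mem_Icc.2 ht)

lemma loss_hasDerivAt {n L d : ℕ} (X : Fin n → Fin L → Fin d → ℝ) (z : Fin n → Fin d → ℝ)
    (y : Fin n → ℝ) (v : Fin d → ℝ) (wp wm : ℝ → Fin d → ℝ)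
    (hflow : Flow X z y v wp wm) {t : ℝ} (ht : 0 ≤ t) :
    HasDerivAt (fun s => lossD X z y v (bCurve wp wm s))
      (∑ j, -((pD (lossD X z y v) (bCurve wp wm t) j) ^ 2 * (wp t j ^ 2 + wm t j ^ 2))) t := by
  have hd := lossD_diff X z y v
  have hcurve : HasDerivAt (fun s => bCurve wp wm s)
      (fun j => -(pD (lossD X z y v) (bCurve wp wm t) j * (wp t j ^ 2 + wm t j ^ 2))) t := by
    rw [hasDerivAt_pi]
    intro j
    obtain ⟨h1, h2⟩ := flow_deriv X z y v wp wm hflow ht j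
    have h := ((h1.fun_mul h1).sub (h2.fun_mul h2)).const_mul ((2:ℝ)⁻¹)
    convert! h using 1
    · funext s
      show (wp s j ^ 2 - wm s j ^ 2) / 2 = _
      rw [Pi.sub_apply]; ring
    · ring
  have hF : HasFDerivAt (lossD X z y v) (fderiv ℝ (lossD X z y v) (bCurve wp wm t))
      (bCurve wp wm t) := (hd (bCurve wp wm t)).hasFDerivAt
  have hcomp := hF.comp_hasDerivAt t hcurve
  convert! hcomp using 1
  have hexp := LinearMap.pi_apply_eq_sum_univ
    ((fderiv ℝ (lossD X z y v) (bCurve wp wm t)) : (Fin d → ℝ) →ₗ[ℝ] ℝ)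
    (fun j => -(pD (lossD X z y v) (bCurve wp wm t) j * (wp t j ^ 2 + wm t j ^ 2)))
  rw [show ((fderiv ℝ (lossD X z y v) (bCurve wp wm t) : (Fin d → ℝ) →ₗ[ℝ] ℝ) :
      (Fin d → ℝ) → ℝ) = (fderiv ℝ (lossD X z y v) (bCurve wp wm t) : (Fin d → ℝ) → ℝ)
      from rfl] at hexp
  rw [hexp]
  apply Finset.sum_congr rfl
  intro j _
  have hsingle : (fun k => if j = k then (1:ℝ) else 0) = Pi.single j 1 := by
    funext k
    by_cases h : j = k
    · subst h; simp
    · simp [h, Pi.single_apply, Ne.symm h]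
  rw [hsingle]
  show -((pD (lossD X z y v) (bCurve wp wm t) j) ^ 2 * (wp t j ^ 2 + wm t j ^ 2))
      = (-(pD (lossD X z y v) (bCurve wp wm t) j * (wp t j ^ 2 + wm t j ^ 2)))
        * (pD (lossD X z y v) (bCurve wp wm t) j)
  ring


/-- descent inequality for the loss along the flow; the loss is nonincreasing. -/
theorem statement8 {n L d : ℕ}
    (X : Fin n → Fin L → Fin d → ℝ) (z : Fin n → Fin d → ℝ)
    (y : Fin n → ℝ) (v : Fin d → ℝ)
    (wp wm : ℝ → Fin d → ℝ) (hflow : Flow X z y v wp wm)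
    (ω0 : Fin d → ℝ) (hω : ∀ j, ω0 j ≠ 0)
    (hip : wp 0 = ω0) (him : wm 0 = ω0)
    (wmin : ℝ) (hwmin : wmin = sInf {x : ℝ | ∃ j : Fin d, x = |ω0 j|}) :
    (∀ t : ℝ, 0 ≤ t →
      deriv (fun s => lossD X z y v (bCurve wp wm s)) t ≤
        -(2 * wmin ^ 2 / (n : ℝ)) *
          ∑ j, (pD (lossD X z y v) (bCurve wp wm t) j) ^ 2) ∧
    (∀ s₁ s₂ : ℝ, 0 ≤ s₁ → s₁ ≤ s₂ →
      lossD X z y v (bCurve wp wm s₂) ≤ lossD X z y v (bCurve wp wm s₁)) := by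
  constructor
  · intro t ht
    rw [(loss_hasDerivAt X z y v wp wm hflow ht).deriv]
    have hrhs : -(2 * wmin ^ 2 / (n : ℝ)) * ∑ j, (pD (lossD X z y v) (bCurve wp wm t) j) ^ 2
        = ∑ j, -((2 * wmin ^ 2 / (n : ℝ)) * (pD (lossD X z y v) (bCurve wp wm t) j) ^ 2) := by
      rw [neg_mul, Finset.mul_sum, ← Finset.sum_neg_distrib]
    rw [hrhs]
    apply Finset.sum_le_sum
    intro j _
    have hbound : 2 * wmin ^ 2 / (n : ℝ) ≤ wp t j ^ 2 + wm t j ^ 2 := by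
      rcases Nat.eq_zero_or_pos n with hn | hn
      · subst hn; simp; positivity
      · have hlb : ∀ x ∈ {x : ℝ | ∃ j : Fin d, x = |ω0 j|}, (0:ℝ) ≤ x := by
          rintro x ⟨k, rfl⟩; exact abs_nonneg _
        have h0 : 0 ≤ wmin := hwmin ▸ le_csInf ⟨|ω0 j|, j, rfl⟩ hlb
        have h1 : wmin ≤ |ω0 j| := hwmin ▸ csInf_le ⟨0, hlb⟩ ⟨j, rfl⟩
        have hsq : wmin ^ 2 ≤ ω0 j ^ 2 := by
          rw [← sq_abs (ω0 j)]
          exact pow_le_pow_left₀ h0 h1 2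
        have hcons : wp t j * wm t j = ω0 j * ω0 j := by
          rw [conserve X z y v wp wm hflow ht j, hip, him]
        have hstep : 2 * wmin ^ 2 / (n : ℝ) ≤ 2 * wmin ^ 2 := by
          apply div_le_self (by positivity)
          exact_mod_cast hn
        nlinarith [sq_nonneg (wp t j - wm t j)]
    have hG := sq_nonneg (pD (lossD X z y v) (bCurve wp wm t) j)
    nlinarith
  · intro s₁ s₂ h₁ h₂
    have hanti : AntitoneOn (fun s => lossD X z y v (bCurve wp wm s)) (Set.Ici 0) := by
      apply antitoneOn_of_deriv_nonpos (convex_Ici 0)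
      · intro x hx
        exact (loss_hasDerivAt X z y v wp wm hflow hx).continuousAt.continuousWithinAt
      · intro x hx
        rw [interior_Ici] at hx
        exact (loss_hasDerivAt X z y v wp wm hflow hx.le).differentiableAt.differentiableWithinAt
      · intro x hx
        rw [interior_Ici] at hx
        rw [(loss_hasDerivAt X z y v wp wm hflow hx.le).deriv]
        apply Finset.sum_nonpos
        intro j _
        have : (0:ℝ) ≤ (pD (lossD X z y v) (bCurve wp wm x) j) ^ 2 * (wp x j ^ 2 + wm x j ^ 2) := by
          positivity
        linarith
    exact hanti (Set.mem_Ici.2 h₁) (Set.mem_Ici.2 (h₁.trans h₂)) h₂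


end AttnGF
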